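/- Let ε > 0 and c₀ ≥ 0. Let φ : [0,∞) → [0,∞) be differentiable and g : [0,∞) → [0,∞) be locally integrable, and suppose that φ'(t) + 2ε·φ(t) ≤ g(t)·φ(t) for all t ≥ 0, and that ∫_τ^t g(y) dy ≤ c₀ + ε·(t − τ) for all 0 ≤ τ ≤ t. Then there exists c₁ ≥ 0 (one may take c₁ = e^{c₀}) such that φ(t) ≤ c₁·φ(0)·e^{−εt} for all t ≥ 0. -/

import Mathlib

open Real Set MeasureTheory

private lemma exp_step {x y δ : ℝ} (hxy : x ≤ y) (hδ : y - x ≤ δ) :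
    Real.exp y * (y - x) ≤ Real.exp δ * (Real.exp y - Real.exp x) := by
  have h1 : (y - x) + 1 ≤ Real.exp (y - x) := Real.add_one_le_exp (y - x)
  have h2 : Real.exp (y - x) ≤ Real.exp δ := Real.exp_le_exp.2 hδ
  have h3 : Real.exp y = Real.exp x * Real.exp (y - x) := by
    rw [← Real.exp_add]; ring_nf
  have hx := Real.exp_pos x
  have hΔ := Real.exp_pos (y - x)
  nlinarith [mul_nonneg (mul_nonneg (sub_nonneg.2 h2) (by linarith : (0:ℝ) ≤ Real.exp (y - x) - 1)) hx.le,
    mul_nonneg (mul_nonneg hΔ.le (by linarith : (0:ℝ) ≤ Real.exp (y - x) - 1 - (y - x))) hx.le]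

private lemma keyA (g : ℝ → ℝ) (hg0 : ∀ x, 0 ≤ g x)
    (hgi : ∀ a b : ℝ, IntervalIntegrable g volume a b)
    {s t : ℝ} (hst : s ≤ t) :
    (∫ y in s..t, g y * Real.exp (∫ u in (0:ℝ)..y, g u)) ≤
      Real.exp (∫ u in (0:ℝ)..t, g u) - Real.exp (∫ u in (0:ℝ)..s, g u) := by
  set G : ℝ → ℝ := fun y => ∫ u in (0:ℝ)..y, g u with hGdef
  have Gcont : Continuous G := intervalIntegral.continuous_primitive hgi 0
  have Gdiff : ∀ a b : ℝ, G b - G a = ∫ u in a..b, g u := by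
    intro a b
    have := intervalIntegral.integral_add_adjacent_intervals (hgi 0 a) (hgi a b)
    simp only [hGdef]
    linarith
  have Gmono : Monotone G := by
    intro a b hab
    have h := Gdiff a b
    have h2 : 0 ≤ ∫ u in a..b, g u :=
      intervalIntegral.integral_nonneg hab (fun u _ => hg0 u)
    linarith
  have intGE : ∀ a b : ℝ, IntervalIntegrable (fun y => g y * Real.exp (G y)) volume a b :=
    fun a b => (hgi a b).mul_continuousOn ((Real.continuous_exp.comp Gcont).continuousOn)
  show (∫ y in s..t, g y * Real.exp (G y)) ≤ Real.exp (G t) - Real.exp (G s)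
  rcases eq_or_lt_of_le hst with rfl | hlt
  · simp
  have main : ∀ δ : ℝ, 0 < δ →
      (∫ y in s..t, g y * Real.exp (G y)) ≤ Real.exp δ * (Real.exp (G t) - Real.exp (G s)) := by
    intro δ hδ
    obtain ⟨η, hη, hu⟩ := Metric.uniformContinuousOn_iff.1
      ((isCompact_Icc (a := s) (b := t)).uniformContinuousOn_of_continuous
        Gcont.continuousOn) δ hδ
    obtain ⟨n, hn⟩ := exists_nat_gt ((t - s) / η)
    have hts : 0 < t - s := sub_pos.2 hlt
    have hn0 : 0 < (n : ℝ) := lt_trans (div_pos hts hη) hn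
    set c : ℝ := (t - s) / n with hc
    have hc0 : 0 < c := div_pos hts hn0
    have hcη : c < η := by
      rw [hc, div_lt_iff₀ hn0]
      rw [div_lt_iff₀ hη] at hn
      linarith [mul_comm η (n : ℝ)]
    set p : ℕ → ℝ := fun i => s + i * c with hp
    have hp0 : p 0 = s := by simp [hp]
    have hpn : p n = t := by
      simp only [hp, hc]
      field_simp
      ring
    have hpstep : ∀ i : ℕ, p (i + 1) - p i = c := by
      intro i; simp only [hp]; push_cast; ring
    have hpmono : ∀ i : ℕ, p i ≤ p (i + 1) := by
      intro i; have := hpstep i; linarith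
    have hpmem : ∀ i : ℕ, i ≤ n → p i ∈ Icc s t := by
      intro i hi
      constructor
      · simp only [hp]
        have : 0 ≤ (i : ℝ) * c := by positivity
        linarith
      · have : p i ≤ p n := by
          simp only [hp]
          have : (i : ℝ) ≤ (n : ℝ) := by exact_mod_cast hi
          nlinarith
        rw [hpn] at this; exact this
    have hsum := intervalIntegral.sum_integral_adjacent_intervals
      (a := p) (n := n) (μ := volume) (f := fun y => g y * Real.exp (G y))
      (fun i _ => intGE _ _)
    rw [hp0, hpn] at hsum
    rw [← hsum]
    have piece : ∀ i : ℕ, i < n →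
        (∫ y in p i..p (i + 1), g y * Real.exp (G y)) ≤
          Real.exp δ * (Real.exp (G (p (i + 1))) - Real.exp (G (p i))) := by
      intro i hi
      have hmem1 := hpmem i hi.le
      have hmem2 := hpmem (i + 1) hi
      have h1 : (∫ y in p i..p (i + 1), g y * Real.exp (G y)) ≤
          ∫ y in p i..p (i + 1), g y * Real.exp (G (p (i + 1))) := by
        apply intervalIntegral.integral_mono_on (hpmono i) (intGE _ _)
          ((hgi _ _).mul_const _)
        intro y hy
        exact mul_le_mul_of_nonneg_left (Real.exp_le_exp.2 (Gmono hy.2)) (hg0 y)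
      have h2 : (∫ y in p i..p (i + 1), g y * Real.exp (G (p (i + 1)))) =
          Real.exp (G (p (i + 1))) * (G (p (i + 1)) - G (p i)) := by
        rw [intervalIntegral.integral_mul_const, Gdiff]
        ring
      have hdist : dist (G (p (i + 1))) (G (p i)) < δ := by
        apply hu _ hmem2 _ hmem1
        rw [Real.dist_eq, hpstep i, abs_of_pos hc0]
        exact hcη
      have h3 : G (p (i + 1)) - G (p i) ≤ δ := by
        have := le_abs_self (G (p (i + 1)) - G (p i))
        rw [Real.dist_eq] at hdist
        linarith
      have h4 : G (p i) ≤ G (p (i + 1)) := Gmono (hpmono i)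
      calc (∫ y in p i..p (i + 1), g y * Real.exp (G y))
          ≤ Real.exp (G (p (i + 1))) * (G (p (i + 1)) - G (p i)) := by rw [← h2]; exact h1
        _ ≤ Real.exp δ * (Real.exp (G (p (i + 1))) - Real.exp (G (p i))) := exp_step h4 h3
    calc (∑ i ∈ Finset.range n, ∫ y in p i..p (i + 1), g y * Real.exp (G y))
        ≤ ∑ i ∈ Finset.range n,
            Real.exp δ * (Real.exp (G (p (i + 1))) - Real.exp (G (p i))) :=
          Finset.sum_le_sum (fun i hi => piece i (Finset.mem_range.1 hi))
      _ = Real.exp δ * (Real.exp (G t) - Real.exp (G s)) := by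
          rw [← Finset.mul_sum, Finset.sum_range_sub (fun i => Real.exp (G (p i))), hp0, hpn]
  have tend : Filter.Tendsto (fun δ : ℝ => Real.exp δ * (Real.exp (G t) - Real.exp (G s)))
      (nhdsWithin 0 (Ioi 0)) (nhds (Real.exp (G t) - Real.exp (G s))) := by
    have h := ((Real.continuous_exp.tendsto 0).mul_const
      (Real.exp (G t) - Real.exp (G s))).mono_left (nhdsWithin_le_nhds (s := Ioi (0:ℝ)))
    simpa using h
  exact ge_of_tendsto tend (eventually_mem_nhdsWithin.mono (fun δ hδ => main δ hδ))

private lemma gronwallB (g h h' : ℝ → ℝ) (hg0 : ∀ x, 0 ≤ g x)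
    (hgi : ∀ a b : ℝ, IntervalIntegrable g volume a b)
    (hh0 : ∀ x ∈ Ici (0:ℝ), 0 ≤ h x)
    (hdiff : ∀ x ∈ Ici (0:ℝ), HasDerivWithinAt h (h' x) (Ici (0:ℝ)) x)
    (hle : ∀ x ∈ Ici (0:ℝ), h' x ≤ g x * h x)
    {T : ℝ} (hT : 0 ≤ T) :
    h T ≤ h 0 * Real.exp (∫ u in (0:ℝ)..T, g u) := by
  set G : ℝ → ℝ := fun y => ∫ u in (0:ℝ)..y, g u with hGdef
  have Gcont : Continuous G := intervalIntegral.continuous_primitive hgi 0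
  have hcont : ContinuousOn h (Ici (0:ℝ)) :=
    fun x hx => (hdiff x hx).continuousWithinAt
  have hIccIci : Icc (0:ℝ) T ⊆ Ici 0 := fun x hx => hx.1
  set F : ℝ → ℝ := fun y => h y * Real.exp (-(G y)) with hFdef
  have Fcont : ContinuousOn F (Icc (0:ℝ) T) :=
    (hcont.mono hIccIci).mul (Gcont.neg.rexp.continuousOn)
  obtain ⟨u, humem, humax⟩ := isCompact_Icc.exists_isMaxOn (nonempty_Icc.2 hT) Fcont
  set K : ℝ := F u with hKdef
  have hK0 : 0 ≤ K := mul_nonneg (hh0 u humem.1) (Real.exp_pos _).le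
  have hFy : ∀ y, y ∈ Icc (0:ℝ) T → h y ≤ K * Real.exp (G y) := by
    intro y hy
    have := humax hy
    have h1 : h y * Real.exp (-(G y)) ≤ K := this
    have h2 : Real.exp (-(G y)) * Real.exp (G y) = 1 := by
      rw [← Real.exp_add]; simp
    calc h y = (h y * Real.exp (-(G y))) * Real.exp (G y) := by
          rw [mul_assoc, h2, mul_one]
      _ ≤ K * Real.exp (G y) :=
          mul_le_mul_of_nonneg_right h1 (Real.exp_pos (G y)).le
  have hhu : h u = K * Real.exp (G u) := by
    have h2 : Real.exp (-(G u)) * Real.exp (G u) = 1 := by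
      rw [← Real.exp_add]; simp
    simp only [hKdef, hFdef]
    rw [mul_assoc, h2, mul_one]
  -- interval integrability of g * h on [0, u]
  have hcont_u : ContinuousOn h (uIcc (0:ℝ) u) := by
    apply hcont.mono
    rw [uIcc_of_le humem.1]
    exact fun x hx => hx.1
  have hgh_int : IntervalIntegrable (fun y => g y * h y) volume 0 u :=
    (hgi 0 u).mul_continuousOn hcont_u
  have key1 : h u - h 0 ≤ ∫ y in (0:ℝ)..u, g y * h y := by
    refine intervalIntegral.sub_le_integral_of_hasDeriv_right_of_le (g' := h')
      humem.1 (hcont.mono fun x hx => hx.1) (fun x hx =>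
        (hdiff x hx.1.le).mono (fun y hy => le_of_lt (lt_trans hx.1 hy)))
      ((intervalIntegrable_iff_integrableOn_Icc_of_le humem.1).1 hgh_int)
      (fun x hx => hle x hx.1.le)
  have key2 : (∫ y in (0:ℝ)..u, g y * h y) ≤ K * (Real.exp (G u) - Real.exp (G 0)) := by
    have intGE : IntervalIntegrable (fun y => K * (g y * Real.exp (G y))) volume 0 u :=
      (((hgi 0 u).mul_continuousOn ((Real.continuous_exp.comp Gcont).continuousOn)).const_mul K)
    have h1 : (∫ y in (0:ℝ)..u, g y * h y) ≤
        ∫ y in (0:ℝ)..u, K * (g y * Real.exp (G y)) := by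
      apply intervalIntegral.integral_mono_on humem.1 hgh_int intGE
      intro y hy
      have hyT : y ∈ Icc (0:ℝ) T := ⟨hy.1, hy.2.trans humem.2⟩
      calc g y * h y ≤ g y * (K * Real.exp (G y)) :=
            mul_le_mul_of_nonneg_left (hFy y hyT) (hg0 y)
        _ = K * (g y * Real.exp (G y)) := by ring
    have h2 : (∫ y in (0:ℝ)..u, K * (g y * Real.exp (G y))) =
        K * ∫ y in (0:ℝ)..u, g y * Real.exp (G y) := by
      rw [intervalIntegral.integral_const_mul]
    have h3 := keyA g hg0 hgi humem.1
    calc (∫ y in (0:ℝ)..u, g y * h y)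
        ≤ K * ∫ y in (0:ℝ)..u, g y * Real.exp (G y) := by rw [← h2]; exact h1
      _ ≤ K * (Real.exp (G u) - Real.exp (G 0)) := mul_le_mul_of_nonneg_left h3 hK0
  have hG0 : G 0 = 0 := by simp [hGdef]
  have hKh0 : K ≤ h 0 := by
    rw [hG0, Real.exp_zero] at key2
    rw [hhu] at key1
    linarith
  calc h T ≤ K * Real.exp (G T) := hFy T ⟨hT, le_refl T⟩
    _ ≤ h 0 * Real.exp (G T) := mul_le_mul_of_nonneg_right hKh0 (Real.exp_pos _).le

/-- Gronwall-type lemma: if `φ' + 2εφ ≤ gφ` on `[0,∞)` and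
`∫_τ^t g ≤ c₀ + ε(t-τ)`, then `φ(t) ≤ c₁ φ(0) e^{-εt}` for some `c₁ ≥ 0`. -/
theorem stmt10 (ε c₀ : ℝ) (hε : 0 < ε) (hc₀ : 0 ≤ c₀)
    (φ φ' g : ℝ → ℝ)
    (hφnonneg : ∀ t ∈ Ici (0:ℝ), 0 ≤ φ t)
    (hgnonneg : ∀ t ∈ Ici (0:ℝ), 0 ≤ g t)
    (hφdiff : ∀ t ∈ Ici (0:ℝ), HasDerivWithinAt φ (φ' t) (Ici (0:ℝ)) t)
    (hgint : LocallyIntegrableOn g (Ici (0:ℝ)))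
    (hineq : ∀ t ∈ Ici (0:ℝ), φ' t + 2*ε*φ t ≤ g t * φ t)
    (hgbound : ∀ τ t : ℝ, 0 ≤ τ → τ ≤ t → (∫ y in τ..t, g y) ≤ c₀ + ε*(t - τ)) :
    ∃ c₁ : ℝ, 0 ≤ c₁ ∧ ∀ t ∈ Ici (0:ℝ), φ t ≤ c₁ * φ 0 * Real.exp (-ε*t) := by
  set gb : ℝ → ℝ := (Ici (0:ℝ)).indicator g with hgbdef
  have hgb0 : ∀ x, 0 ≤ gb x := fun x =>
    Set.indicator_nonneg (fun y hy => hgnonneg y hy) x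
  have hgbi : ∀ a b : ℝ, IntervalIntegrable gb volume a b := by
    intro a b
    rw [intervalIntegrable_iff]
    have hcompact : IsCompact (Ici (0:ℝ) ∩ uIcc a b) :=
      isCompact_uIcc.inter_left isClosed_Ici
    have h1 : IntegrableOn g (Ici (0:ℝ) ∩ uIcc a b) volume :=
      hgint.integrableOn_compact_subset inter_subset_left hcompact
    have h2 : IntegrableOn g (Ici (0:ℝ) ∩ Set.uIoc a b) volume :=
      h1.mono_set (inter_subset_inter_right _ Set.uIoc_subset_uIcc)
    unfold IntegrableOn
    rw [hgbdef, integrable_indicator_iff measurableSet_Ici]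
    unfold IntegrableOn
    rw [Measure.restrict_restrict measurableSet_Ici]
    exact h2
  set h : ℝ → ℝ := fun t => φ t * Real.exp (2*ε*t) with hhdef
  set h' : ℝ → ℝ := fun t => (φ' t + 2*ε*φ t) * Real.exp (2*ε*t) with hh'def
  have hh0 : ∀ x ∈ Ici (0:ℝ), 0 ≤ h x :=
    fun x hx => mul_nonneg (hφnonneg x hx) (Real.exp_pos _).le
  have hdiff : ∀ x ∈ Ici (0:ℝ), HasDerivWithinAt h (h' x) (Ici (0:ℝ)) x := by
    intro x hx
    have hexp : HasDerivAt (fun t : ℝ => Real.exp (2*ε*t))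
        (Real.exp (2*ε*x) * (2*ε)) x := by
      have hlin : HasDerivAt (fun t : ℝ => 2*ε*t) (2*ε) x := by
        simpa using (hasDerivAt_id x).const_mul (2*ε)
      exact hlin.exp
    have : HasDerivWithinAt (fun y => φ y * Real.exp (2*ε*y))
        (φ' x * Real.exp (2*ε*x) + φ x * (Real.exp (2*ε*x) * (2*ε))) (Ici (0:ℝ)) x :=
      (hφdiff x hx).mul hexp.hasDerivWithinAt
    convert this using 1
    simp only [hh'def]
    ring
  have hle : ∀ x ∈ Ici (0:ℝ), h' x ≤ gb x * h x := by
    intro x hx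
    have h1 := hineq x hx
    have h2 : gb x = g x := Set.indicator_of_mem hx g
    rw [h2]
    simp only [hh'def, hhdef]
    calc (φ' x + 2*ε*φ x) * Real.exp (2*ε*x)
        ≤ (g x * φ x) * Real.exp (2*ε*x) :=
          mul_le_mul_of_nonneg_right h1 (Real.exp_pos _).le
      _ = g x * (φ x * Real.exp (2*ε*x)) := by ring
  refine ⟨Real.exp c₀, (Real.exp_pos _).le, fun t ht => ?_⟩
  have ht0 : (0:ℝ) ≤ t := ht
  have hB := gronwallB gb h h' hgb0 hgbi hh0 hdiff hle ht0
  have hGeq : (∫ u in (0:ℝ)..t, gb u) = ∫ u in (0:ℝ)..t, g u := by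
    apply intervalIntegral.integral_congr
    intro y hy
    rw [uIcc_of_le ht0] at hy
    exact Set.indicator_of_mem hy.1 g
  have hGb : (∫ u in (0:ℝ)..t, gb u) ≤ c₀ + ε * t := by
    rw [hGeq]
    have := hgbound 0 t le_rfl ht0
    simpa using this
  have hfo : 0 ≤ φ 0 := hφnonneg 0 self_mem_Ici
  have hh00 : h 0 = φ 0 := by simp [hhdef]
  have h1 : φ t * Real.exp (2*ε*t) ≤ φ 0 * Real.exp (c₀ + ε*t) := by
    rw [hh00] at hB
    calc φ t * Real.exp (2*ε*t) = h t := by rw [hhdef]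
      _ ≤ φ 0 * Real.exp (∫ u in (0:ℝ)..t, gb u) := hB
      _ ≤ φ 0 * Real.exp (c₀ + ε*t) :=
          mul_le_mul_of_nonneg_left (Real.exp_le_exp.2 hGb) hfo
  calc φ t = (φ t * Real.exp (2*ε*t)) * Real.exp (-(2*ε*t)) := by
        rw [mul_assoc, ← Real.exp_add]; simp
    _ ≤ (φ 0 * Real.exp (c₀ + ε*t)) * Real.exp (-(2*ε*t)) :=
        mul_le_mul_of_nonneg_right h1 (Real.exp_pos _).le
    _ = Real.exp c₀ * φ 0 * Real.exp (-ε*t) := by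
        rw [mul_assoc, ← Real.exp_add, show c₀ + ε*t + -(2*ε*t) = c₀ + -ε*t by ring,
          Real.exp_add]
        ring
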